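/- The peak AoI of the network over the horizon [0,T] admits the closed form: sup over all vertices v ∈ V and all real t ∈ [0,T] of A(v,t) equals max over v ∈ V of the maximum of the three quantities (a) A₀ + τ₁(v), (b) 1 + T − t_k, and (c) max over 2 ≤ j ≤ k_v of ( 1 + dist(s_{i_j}, v) + t_{i_j} − t_{i_{j−1}} ) (the maximum in (c) being over an empty set, hence omitted, when k_v = 1). -/
import Mathlib


open Finset

def tsel (Δ j : ℕ) : ℕ := (j - 1) * Δ + 1

noncomputable def AoI {V : Type*} (G : SimpleGraph V) (s : ℕ → V) (Δ k A0 : ℕ) (v : V) :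
    ℕ → ℕ
  | 0 => A0
  | t + 1 =>
    let prev := AoI G s Δ k A0 v t
    let Ω : Finset ℕ := (Finset.Icc 1 k).filter
      (fun j => t + 1 = tsel Δ j + G.dist (s j) v ∧ G.dist (s j) v + 1 ≤ prev)
    if h : Ω.Nonempty then Ω.inf' h (fun j => 1 + G.dist (s j) v) else prev + 1

noncomputable def AoIR {V : Type*} (G : SimpleGraph V) (s : ℕ → V) (Δ k A0 : ℕ) (v : V)
    (t : ℝ) : ℝ :=
  (AoI G s Δ k A0 v ⌊t⌋₊ : ℝ) + (t - ⌊t⌋₊)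

open scoped Classical in
noncomputable def Dset {V : Type*} (G : SimpleGraph V) (s : ℕ → V) (Δ k : ℕ) (v : V) :
    Finset ℕ :=
  (Finset.Icc 1 k).filter (fun x => ∀ y ∈ Finset.Icc 1 k, x < y →
    tsel Δ x + G.dist (s x) v < tsel Δ y + G.dist (s y) v)

namespace AoIAux

lemma tsel_one_le (Δ j : ℕ) : 1 ≤ tsel Δ j := Nat.le_add_left 1 _

lemma tsel_mono (Δ : ℕ) {x y : ℕ} (h : x ≤ y) : tsel Δ x ≤ tsel Δ y := by
  unfold tsel
  exact Nat.add_le_add_right (Nat.mul_le_mul_right _ (Nat.sub_le_sub_right h 1)) 1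

lemma tsel_lt {Δ : ℕ} (hΔ : 1 ≤ Δ) {x y : ℕ} (hx : 1 ≤ x) (hxy : x < y) :
    tsel Δ x < tsel Δ y := by
  unfold tsel
  have h1 : (x - 1 + 1) * Δ ≤ (y - 1) * Δ := Nat.mul_le_mul_right _ (by omega)
  have h2 : (x - 1 + 1) * Δ = (x - 1) * Δ + Δ := by ring
  omega

variable {V : Type*} {G : SimpleGraph V} {s : ℕ → V} {Δ k : ℕ} {v : V}

lemma mem_Dset {x : ℕ} :
    x ∈ Dset G s Δ k v ↔ (1 ≤ x ∧ x ≤ k) ∧ ∀ y, 1 ≤ y → y ≤ k → x < y →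
      tsel Δ x + G.dist (s x) v < tsel Δ y + G.dist (s y) v := by
  classical
  simp [Dset, Finset.mem_filter, Finset.mem_Icc]


lemma k_mem_Dset (hk : 1 ≤ k) : k ∈ Dset G s Δ k v := by
  rw [mem_Dset]
  exact ⟨⟨hk, le_rfl⟩, fun y h1 h2 h3 => absurd h2 (by omega)⟩

lemma domination : ∀ n x, 1 ≤ x → x ≤ k → k - x ≤ n →
    ∃ z ∈ Dset G s Δ k v, x ≤ z ∧
      tsel Δ z + G.dist (s z) v ≤ tsel Δ x + G.dist (s x) v := by
  intro n
  induction n with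
  | zero =>
    intro x h1 h2 h0
    have : x = k := by omega
    subst this
    exact ⟨x, k_mem_Dset h1, le_rfl, le_rfl⟩
  | succ n ih =>
    intro x h1 h2 hn
    by_cases hxd : x ∈ Dset G s Δ k v
    · exact ⟨x, hxd, le_rfl, le_rfl⟩
    · rw [mem_Dset] at hxd
      push_neg at hxd
      obtain ⟨y, hy1, hy2, hxy, hyx⟩ := hxd ⟨h1, h2⟩
      obtain ⟨z, hz, hyz, hzarr⟩ := ih y hy1 hy2 (by omega)
      exact ⟨z, hz, by omega, le_trans hzarr hyx⟩

section Struct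

variable {V : Type*} {G : SimpleGraph V} {s : ℕ → V} {Δ k : ℕ}
    {i : V → ℕ → ℕ} {kv : V → ℕ}

/-- arrival time of info from surviving seed number j -/
noncomputable def τ (G : SimpleGraph V) (s : ℕ → V) (Δ : ℕ) (i : V → ℕ → ℕ) (v : V) (j : ℕ) : ℕ :=
  tsel Δ (i v j) + G.dist (s (i v j)) v

variable (hΔ : 1 ≤ Δ) (hk : 1 ≤ k)
    (hmono : ∀ v, StrictMonoOn (i v) (Set.Icc 1 (kv v)))
    (him : ∀ v, Dset G s Δ k v = (Finset.Icc 1 (kv v)).image (i v))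

include hk him in
lemma kv_pos (v : V) : 1 ≤ kv v := by
  have := k_mem_Dset (G := G) (s := s) (Δ := Δ) (v := v) hk
  rw [him v, Finset.mem_image] at this
  obtain ⟨a, ha, -⟩ := this
  rw [Finset.mem_Icc] at ha
  omega

include him in
lemma i_mem_Dset (v : V) {j : ℕ} (h1 : 1 ≤ j) (h2 : j ≤ kv v) :
    i v j ∈ Dset G s Δ k v := by
  rw [him v, Finset.mem_image]
  exact ⟨j, Finset.mem_Icc.2 ⟨h1, h2⟩, rfl⟩

include him in
lemma i_one_le (v : V) {j : ℕ} (h1 : 1 ≤ j) (h2 : j ≤ kv v) : 1 ≤ i v j :=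
  ((mem_Dset.1 (i_mem_Dset him v h1 h2)).1).1

include him in
lemma i_le_k (v : V) {j : ℕ} (h1 : 1 ≤ j) (h2 : j ≤ kv v) : i v j ≤ k :=
  ((mem_Dset.1 (i_mem_Dset him v h1 h2)).1).2

include hmono him in
lemma i_kv_eq (v : V) (hk : 1 ≤ k) : i v (kv v) = k := by
  have hkmem := k_mem_Dset (G := G) (s := s) (Δ := Δ) (v := v) hk
  rw [him v, Finset.mem_image] at hkmem
  obtain ⟨a, ha, hak⟩ := hkmem
  rw [Finset.mem_Icc] at ha
  have hle : i v a ≤ i v (kv v) :=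
    (hmono v).monotoneOn ⟨ha.1, ha.2⟩ ⟨le_trans ha.1 ha.2, le_rfl⟩ ha.2
  have : i v (kv v) ≤ k := i_le_k him v (le_trans ha.1 ha.2) le_rfl
  omega

include hmono him in
lemma tau_strict (v : V) {a b : ℕ} (h1 : 1 ≤ a) (hab : a < b) (h2 : b ≤ kv v) :
    τ G s Δ i v a < τ G s Δ i v b := by
  have hia : i v a < i v b := hmono v ⟨h1, by omega⟩ ⟨by omega, h2⟩ hab
  have hda := i_mem_Dset him v h1 (by omega)
  have hdb := i_mem_Dset him v (by omega) h2
  rw [mem_Dset] at hda hdb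
  exact hda.2 _ hdb.1.1 hdb.1.2 hia

include hmono him in
lemma tau_mono (v : V) {a b : ℕ} (h1 : 1 ≤ a) (hab : a ≤ b) (h2 : b ≤ kv v) :
    τ G s Δ i v a ≤ τ G s Δ i v b := by
  rcases eq_or_lt_of_le hab with h | h
  · rw [h]
  · exact le_of_lt (tau_strict hmono him v h1 h h2)

include him in
lemma surviving_dominates (v : V) {x : ℕ} (h1 : 1 ≤ x) (h2 : x ≤ k) :
    ∃ j, 1 ≤ j ∧ j ≤ kv v ∧ τ G s Δ i v j ≤ tsel Δ x + G.dist (s x) v ∧ x ≤ i v j := by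
  obtain ⟨z, hz, hxz, hzarr⟩ := domination (G := G) (s := s) (Δ := Δ) (v := v)
    (k - x) x h1 h2 le_rfl
  rw [him v, Finset.mem_image] at hz
  obtain ⟨j, hj, hjz⟩ := hz
  rw [Finset.mem_Icc] at hj
  exact ⟨j, hj.1, hj.2, by rw [τ, hjz]; exact hzarr, hjz ▸ hxz⟩

include hmono him in
lemma tau_one_min (v : V) {x : ℕ} (h1 : 1 ≤ x) (h2 : x ≤ k) :
    τ G s Δ i v 1 ≤ tsel Δ x + G.dist (s x) v := by
  obtain ⟨j, hj1, hj2, hjle, -⟩ := surviving_dominates him v h1 h2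
  exact le_trans (tau_mono hmono him v le_rfl hj1 hj2) hjle

end Struct
section Closed

variable {V : Type*} {G : SimpleGraph V} {s : ℕ → V} {Δ k A0 : ℕ}
    {i : V → ℕ → ℕ} {kv : V → ℕ}

lemma AoI_succ_empty {v : V} {t : ℕ}
    (h : ∀ x, 1 ≤ x → x ≤ k → t + 1 = tsel Δ x + G.dist (s x) v →
        ¬ (G.dist (s x) v + 1 ≤ AoI G s Δ k A0 v t)) :
    AoI G s Δ k A0 v (t + 1) = AoI G s Δ k A0 v t + 1 := by
  rw [AoI, dif_neg]
  rintro ⟨x, hx⟩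
  rw [Finset.mem_filter, Finset.mem_Icc] at hx
  exact h x hx.1.1 hx.1.2 hx.2.1 hx.2.2

lemma AoI_succ_reset {v : V} {t j₀ : ℕ} (h1 : 1 ≤ j₀) (h2 : j₀ ≤ k)
    (harr : t + 1 = tsel Δ j₀ + G.dist (s j₀) v)
    (hage : G.dist (s j₀) v + 1 ≤ AoI G s Δ k A0 v t)
    (hmin : ∀ x, 1 ≤ x → x ≤ k → t + 1 = tsel Δ x + G.dist (s x) v →
        G.dist (s x) v + 1 ≤ AoI G s Δ k A0 v t → G.dist (s j₀) v ≤ G.dist (s x) v) :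
    AoI G s Δ k A0 v (t + 1) = 1 + G.dist (s j₀) v := by
  rw [AoI]
  have hmem : j₀ ∈ (Finset.Icc 1 k).filter
      (fun j => t + 1 = tsel Δ j + G.dist (s j) v ∧
        G.dist (s j) v + 1 ≤ AoI G s Δ k A0 v t) := by
    rw [Finset.mem_filter, Finset.mem_Icc]
    exact ⟨⟨h1, h2⟩, harr, hage⟩
  rw [dif_pos ⟨j₀, hmem⟩]
  apply le_antisymm
  · exact Finset.inf'_le _ hmem
  · apply Finset.le_inf'
    intro x hx
    rw [Finset.mem_filter, Finset.mem_Icc] at hx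
    exact Nat.add_le_add_left (hmin x hx.1.1 hx.1.2 hx.2.1 hx.2.2) 1

lemma AoI_succ_le (v : V) (t : ℕ) :
    AoI G s Δ k A0 v (t + 1) ≤ AoI G s Δ k A0 v t + 1 := by
  rw [AoI]
  by_cases h : ((Finset.Icc 1 k).filter
      (fun j => t + 1 = tsel Δ j + G.dist (s j) v ∧
        G.dist (s j) v + 1 ≤ AoI G s Δ k A0 v t)).Nonempty
  · rw [dif_pos h]
    obtain ⟨x, hx⟩ := h
    refine le_trans (Finset.inf'_le _ hx) ?_
    rw [Finset.mem_filter] at hx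
    omega
  · rw [dif_neg h]

variable (hΔ : 1 ≤ Δ) (hk : 1 ≤ k) (hA0 : 1 ≤ A0)
    (hmono : ∀ v, StrictMonoOn (i v) (Set.Icc 1 (kv v)))
    (him : ∀ v, Dset G s Δ k v = (Finset.Icc 1 (kv v)).image (i v))

include hΔ hk hA0 hmono him in
lemma closed (v : V) : ∀ t : ℕ,
    (t + 1 ≤ τ G s Δ i v 1 → AoI G s Δ k A0 v t = A0 + t) ∧
    (∀ j, 1 ≤ j → j ≤ kv v → τ G s Δ i v j ≤ t →
       (j = kv v ∨ t + 1 ≤ τ G s Δ i v (j + 1)) →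
       AoI G s Δ k A0 v t + tsel Δ (i v j) = 1 + t) := by
  intro t
  induction t with
  | zero =>
    refine ⟨fun _ => rfl, fun j h1 h2 ht _ => absurd ht ?_⟩
    have := tsel_one_le Δ (i v j)
    simp only [τ]
    omega
  | succ t ih =>
    constructor
    · intro ht1
      have he : AoI G s Δ k A0 v (t + 1) = AoI G s Δ k A0 v t + 1 :=
        AoI_succ_empty (fun x hx1 hx2 harr hagex => by
          have := tau_one_min hmono him v hx1 hx2; omega)
      rw [he, ih.1 (by omega)]
      omega
    · intro j hj1 hj2 hτle hdisj
      have hτj : τ G s Δ i v j = tsel Δ (i v j) + G.dist (s (i v j)) v := rfl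
      rcases eq_or_lt_of_le hτle with hre | hlt
      · -- reset at time t+1 = τ_j
        -- age condition
        have hage : G.dist (s (i v j)) v + 1 ≤ AoI G s Δ k A0 v t := by
          by_cases hj1' : j = 1
          · subst hj1'
            have hprev : AoI G s Δ k A0 v t = A0 + t := ih.1 (by omega)
            have := tsel_one_le Δ (i v 1)
            omega
          · have hjj : j - 1 + 1 = j := by omega
            have hstrict : τ G s Δ i v (j - 1) < τ G s Δ i v j :=
              tau_strict hmono him v (by omega) (by omega) hj2
            have hprev : AoI G s Δ k A0 v t + tsel Δ (i v (j - 1)) = 1 + t :=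
              ih.2 (j - 1) (by omega) (by omega) (by omega)
                (Or.inr (by rw [hjj]; omega))
            have htsel : tsel Δ (i v (j - 1)) < tsel Δ (i v j) :=
              tsel_lt hΔ (i_one_le him v (by omega) (by omega))
                (hmono v ⟨by omega, by omega⟩ ⟨by omega, hj2⟩ (by omega))
            omega
        have hmin : ∀ x, 1 ≤ x → x ≤ k → t + 1 = tsel Δ x + G.dist (s x) v →
            G.dist (s x) v + 1 ≤ AoI G s Δ k A0 v t →
            G.dist (s (i v j)) v ≤ G.dist (s x) v := by
          intro x hx1 hx2 harr _
          obtain ⟨j', hj'1, hj'2, hj'le, hxle⟩ := surviving_dominates him v hx1 hx2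
          have hj'j : j' ≤ j := by
            by_contra hc
            push_neg at hc
            have := tau_strict hmono him v hj1 hc hj'2
            omega
          have : i v j' ≤ i v j :=
            (hmono v).monotoneOn ⟨hj'1, by omega⟩ ⟨by omega, hj2⟩ hj'j
          have htsel : tsel Δ x ≤ tsel Δ (i v j) := tsel_mono Δ (by omega)
          omega
        have := AoI_succ_reset (A0 := A0) (i_one_le him v hj1 hj2)
          (i_le_k him v hj1 hj2) (by omega) hage hmin
        omega
      · -- no reset: growth
        have hprev : AoI G s Δ k A0 v t + tsel Δ (i v j) = 1 + t := by
          refine ih.2 j hj1 hj2 (by omega) ?_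
          rcases hdisj with h | h
          · exact Or.inl h
          · exact Or.inr (by omega)
        have he : AoI G s Δ k A0 v (t + 1) = AoI G s Δ k A0 v t + 1 := by
          apply AoI_succ_empty
          intro x hx1 hx2 harr hagex
          obtain ⟨j', hj'1, hj'2, hj'le, hxle⟩ := surviving_dominates him v hx1 hx2
          have hj'j : j' ≤ j := by
            rcases hdisj with h | h
            · omega
            · by_contra hc
              push_neg at hc
              have := tau_mono hmono him v (by omega) (by omega : j + 1 ≤ j') hj'2
              omega
          have : i v j' ≤ i v j :=
            (hmono v).monotoneOn ⟨hj'1, by omega⟩ ⟨by omega, hj2⟩ hj'j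
          have htsel : tsel Δ x ≤ tsel Δ (i v j) := tsel_mono Δ (by omega)
          omega
        omega

end Closed
section Keys

variable {V : Type*} {G : SimpleGraph V} {s : ℕ → V} {Δ k A0 T : ℕ}
    {i : V → ℕ → ℕ} {kv : V → ℕ}

variable (hΔ : 1 ≤ Δ) (hk : 1 ≤ k) (hA0 : 1 ≤ A0)
    (hmono : ∀ v, StrictMonoOn (i v) (Set.Icc 1 (kv v)))
    (him : ∀ v, Dset G s Δ k v = (Finset.Icc 1 (kv v)).image (i v))
    (hT : ∀ v, tsel Δ (i v (kv v)) + G.dist (s (i v (kv v))) v ≤ T)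

include hk hmono him in
lemma exists_J (v : V) (m : ℕ) (h : τ G s Δ i v 1 ≤ m) :
    ∃ j, 1 ≤ j ∧ j ≤ kv v ∧ τ G s Δ i v j ≤ m ∧
      (j = kv v ∨ (j + 1 ≤ kv v ∧ m + 1 ≤ τ G s Δ i v (j + 1))) := by
  classical
  have hne : ((Finset.Icc 1 (kv v)).filter (fun j => τ G s Δ i v j ≤ m)).Nonempty := by
    refine ⟨1, ?_⟩
    rw [Finset.mem_filter, Finset.mem_Icc]
    exact ⟨⟨le_rfl, kv_pos hk him v⟩, h⟩
  have hjmem := Finset.max'_mem _ hne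
  rw [Finset.mem_filter, Finset.mem_Icc] at hjmem
  refine ⟨_, hjmem.1.1, hjmem.1.2, hjmem.2, ?_⟩
  by_cases hjkv : ((Finset.Icc 1 (kv v)).filter (fun j => τ G s Δ i v j ≤ m)).max' hne = kv v
  · exact Or.inl hjkv
  · refine Or.inr ⟨by omega, ?_⟩
    by_contra hc
    push_neg at hc
    have hmem2 : ((Finset.Icc 1 (kv v)).filter (fun j => τ G s Δ i v j ≤ m)).max' hne + 1 ∈
        ((Finset.Icc 1 (kv v)).filter (fun j => τ G s Δ i v j ≤ m)) := by
      rw [Finset.mem_filter, Finset.mem_Icc]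
      exact ⟨⟨by omega, by omega⟩, by omega⟩
    have := Finset.le_max' _ _ hmem2
    omega

include hΔ hk hA0 hmono him hT in
lemma key1 (v : V) (m : ℕ) (hm : m + 1 ≤ T) :
    AoI G s Δ k A0 v m + 1 ≤
      max (A0 + tsel Δ (i v 1) + G.dist (s (i v 1)) v)
        (max (1 + T - tsel Δ k)
          ((Finset.Icc 2 (kv v)).sup (fun j =>
            1 + G.dist (s (i v j)) v + (tsel Δ (i v j) - tsel Δ (i v (j - 1)))))) := by
  have hτ1 : τ G s Δ i v 1 = tsel Δ (i v 1) + G.dist (s (i v 1)) v := rfl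
  by_cases hcase : m + 1 ≤ τ G s Δ i v 1
  · have hA := (closed hΔ hk hA0 hmono him v m).1 hcase
    refine le_trans ?_ (le_max_left _ _)
    omega
  · push_neg at hcase
    obtain ⟨j, hj1, hj2, hjm, hdisj⟩ := exists_J hk hmono him v m (by omega)
    have hA := (closed hΔ hk hA0 hmono him v m).2 j hj1 hj2 hjm
      (by rcases hdisj with h | h; exact Or.inl h; exact Or.inr (by omega))
    rcases hdisj with h | ⟨hjkv, hjτ⟩
    · -- j = kv v
      subst h
      rw [i_kv_eq hmono him v hk] at hA
      have hmid : AoI G s Δ k A0 v m + 1 ≤ 1 + T - tsel Δ k := by omega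
      exact le_trans hmid (le_trans (le_max_left _ _) (le_max_right _ _))
    · -- next peak bounded by term c at j+1
      have hτ2 : τ G s Δ i v (j + 1) =
          tsel Δ (i v (j + 1)) + G.dist (s (i v (j + 1))) v := rfl
      have htsel : tsel Δ (i v j) ≤ tsel Δ (i v (j + 1)) :=
        tsel_mono Δ ((hmono v).monotoneOn ⟨hj1, by omega⟩ ⟨by omega, hjkv⟩ (by omega))
      have hc : AoI G s Δ k A0 v m + 1 ≤
          1 + G.dist (s (i v (j + 1))) v +
            (tsel Δ (i v (j + 1)) - tsel Δ (i v (j + 1 - 1))) := by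
        have hidx : j + 1 - 1 = j := by omega
        rw [hidx]
        omega
      have hmem : j + 1 ∈ Finset.Icc 2 (kv v) := Finset.mem_Icc.2 ⟨by omega, hjkv⟩
      have hsup : (1 + G.dist (s (i v (j + 1))) v +
            (tsel Δ (i v (j + 1)) - tsel Δ (i v (j + 1 - 1)))) ≤
          (Finset.Icc 2 (kv v)).sup (fun j =>
            1 + G.dist (s (i v j)) v + (tsel Δ (i v j) - tsel Δ (i v (j - 1)))) :=
        Finset.le_sup (f := fun j =>
          1 + G.dist (s (i v j)) v + (tsel Δ (i v j) - tsel Δ (i v (j - 1)))) hmem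
      exact le_trans hc (le_trans hsup (le_trans (le_max_right _ _) (le_max_right _ _)))
include hΔ hk hA0 hmono him hT in
lemma key2 (v : V) : AoI G s Δ k A0 v T + tsel Δ k = 1 + T := by
  have := (closed hΔ hk hA0 hmono him v T).2 (kv v) (kv_pos hk him v) le_rfl
    (hT v) (Or.inl rfl)
  rwa [i_kv_eq hmono him v hk] at this

include hmono him hT in
lemma tau_le_T (v : V) {j : ℕ} (h1 : 1 ≤ j) (h2 : j ≤ kv v) : τ G s Δ i v j ≤ T :=
  le_trans (tau_mono hmono him v h1 h2 le_rfl) (hT v)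

include hΔ hk hA0 hmono him hT in
lemma attain_a (v : V) :
    τ G s Δ i v 1 ≤ T ∧
    AoI G s Δ k A0 v (τ G s Δ i v 1 - 1) + 1 =
      A0 + tsel Δ (i v 1) + G.dist (s (i v 1)) v := by
  have hτ1 : τ G s Δ i v 1 = tsel Δ (i v 1) + G.dist (s (i v 1)) v := rfl
  have hpos : 1 ≤ τ G s Δ i v 1 := by
    have := tsel_one_le Δ (i v 1); omega
  have hA := (closed hΔ hk hA0 hmono him v (τ G s Δ i v 1 - 1)).1 (by omega)
  refine ⟨tau_le_T hmono him hT v le_rfl (kv_pos hk him v), ?_⟩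
  omega

include hΔ hk hA0 hmono him hT in
lemma attain_b (v : V) :
    1 ≤ T ∧ 1 + T - tsel Δ k ≤ AoI G s Δ k A0 v (T - 1) + 1 := by
  have hkey := key2 hΔ hk hA0 hmono him hT v
  have hT1 : 1 ≤ T := by
    have := hT v
    have := tsel_one_le Δ (i v (kv v))
    omega
  have hsucc : AoI G s Δ k A0 v T ≤ AoI G s Δ k A0 v (T - 1) + 1 := by
    have heq : T - 1 + 1 = T := by omega
    have := AoI_succ_le (G := G) (s := s) (Δ := Δ) (k := k) (A0 := A0) v (T - 1)
    rwa [heq] at this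
  exact ⟨hT1, by omega⟩

include hΔ hk hA0 hmono him hT in
lemma attain_c (v : V) {j : ℕ} (h2 : 2 ≤ j) (hjkv : j ≤ kv v) :
    τ G s Δ i v j ≤ T ∧
    1 + G.dist (s (i v j)) v + (tsel Δ (i v j) - tsel Δ (i v (j - 1))) ≤
      AoI G s Δ k A0 v (τ G s Δ i v j - 1) + 1 := by
  have hτj : τ G s Δ i v j = tsel Δ (i v j) + G.dist (s (i v j)) v := rfl
  have hpos : 1 ≤ τ G s Δ i v j := by
    have := tsel_one_le Δ (i v j); omega
  have hstrict : τ G s Δ i v (j - 1) < τ G s Δ i v j :=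
    tau_strict hmono him v (by omega) (by omega) hjkv
  have hidx : j - 1 + 1 = j := by omega
  have hA := (closed hΔ hk hA0 hmono him v (τ G s Δ i v j - 1)).2 (j - 1)
    (by omega) (by omega) (by omega) (Or.inr (by rw [hidx]; omega))
  have htsel : tsel Δ (i v (j - 1)) ≤ tsel Δ (i v j) :=
    tsel_mono Δ (le_of_lt (hmono v ⟨by omega, by omega⟩ ⟨by omega, hjkv⟩ (by omega)))
  exact ⟨tau_le_T hmono him hT v (by omega) hjkv, by omega⟩

end Keys
end AoIAux

theorem stmt4 {V : Type*} [Fintype V] (G : SimpleGraph V) (hconn : G.Connected)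
    (s : ℕ → V) (Δ k A0 T : ℕ) (hΔ : 1 ≤ Δ) (hk : 1 ≤ k) (hA0 : 1 ≤ A0)
    (i : V → ℕ → ℕ) (kv : V → ℕ)
    (hkv : ∀ v, kv v = (Dset G s Δ k v).card)
    (hi0 : ∀ v, i v 0 = 1)
    (hmono : ∀ v, StrictMonoOn (i v) (Set.Icc 1 (kv v)))
    (him : ∀ v, Dset G s Δ k v = (Finset.Icc 1 (kv v)).image (i v))
    (hT : ∀ v, tsel Δ (i v (kv v)) + G.dist (s (i v (kv v))) v ≤ T)
    (P : ℕ)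
    (hP : P = Finset.univ.sup (fun v : V =>
      max (A0 + tsel Δ (i v 1) + G.dist (s (i v 1)) v)
        (max (1 + T - tsel Δ k)
          ((Finset.Icc 2 (kv v)).sup (fun j =>
            1 + G.dist (s (i v j)) v + (tsel Δ (i v j) - tsel Δ (i v (j - 1)))))))) :
    sSup {x : ℝ | ∃ v : V, ∃ t : ℝ, 0 ≤ t ∧ t ≤ (T : ℝ) ∧ x = AoIR G s Δ k A0 v t}
      = (P : ℝ) := by
  classical
  have hV : Nonempty V := hconn.nonempty
  set F : V → ℕ := fun v =>
      max (A0 + tsel Δ (i v 1) + G.dist (s (i v 1)) v)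
        (max (1 + T - tsel Δ k)
          ((Finset.Icc 2 (kv v)).sup (fun j =>
            1 + G.dist (s (i v j)) v + (tsel Δ (i v j) - tsel Δ (i v (j - 1)))))) with hF
  have key1' : ∀ v m, m + 1 ≤ T → AoI G s Δ k A0 v m + 1 ≤ P := by
    intro v m hm
    refine le_trans (AoIAux.key1 hΔ hk hA0 hmono him hT v m hm) ?_
    rw [hP]
    exact Finset.le_sup (f := F) (Finset.mem_univ v)
  have hT1 : 1 ≤ T := (AoIAux.attain_b hΔ hk hA0 hmono him hT (Classical.arbitrary V)).1
  have key2' : ∀ v, AoI G s Δ k A0 v T ≤ P := by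
    intro v
    have h2 := AoIAux.key2 hΔ hk hA0 hmono him hT v
    have hb : AoI G s Δ k A0 v T ≤ 1 + T - tsel Δ k := by omega
    have hb2 : 1 + T - tsel Δ k ≤ F v := by
      simp only [hF]
      exact le_trans (le_max_left _ _) (le_max_right _ _)
    refine le_trans hb (le_trans hb2 ?_)
    rw [hP]
    exact Finset.le_sup (f := F) (Finset.mem_univ v)
  have key3 : ∃ v m, m + 1 ≤ T ∧ P ≤ AoI G s Δ k A0 v m + 1 := by
    obtain ⟨v₀, -, hv₀⟩ := Finset.exists_mem_eq_sup Finset.univ Finset.univ_nonempty F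
    have hPF : P = F v₀ := by rw [hP]; exact hv₀
    rcases max_choice (A0 + tsel Δ (i v₀ 1) + G.dist (s (i v₀ 1)) v₀)
        (max (1 + T - tsel Δ k)
          ((Finset.Icc 2 (kv v₀)).sup (fun j =>
            1 + G.dist (s (i v₀ j)) v₀ + (tsel Δ (i v₀ j) - tsel Δ (i v₀ (j - 1)))))) with
      ha | hbc
    · obtain ⟨hτT, hAa⟩ := AoIAux.attain_a hΔ hk hA0 hmono him hT v₀
      have hpos : 1 ≤ AoIAux.τ G s Δ i v₀ 1 := by
        have := AoIAux.tsel_one_le Δ (i v₀ 1)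
        have : AoIAux.τ G s Δ i v₀ 1 = tsel Δ (i v₀ 1) + G.dist (s (i v₀ 1)) v₀ := rfl
        omega
      have hFa : F v₀ = A0 + tsel Δ (i v₀ 1) + G.dist (s (i v₀ 1)) v₀ := by
        rw [hF]; exact ha
      exact ⟨v₀, AoIAux.τ G s Δ i v₀ 1 - 1, by omega, by omega⟩
    · rcases max_choice (1 + T - tsel Δ k)
          ((Finset.Icc 2 (kv v₀)).sup (fun j =>
            1 + G.dist (s (i v₀ j)) v₀ + (tsel Δ (i v₀ j) - tsel Δ (i v₀ (j - 1))))) with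
        hb | hc
      · obtain ⟨-, hAb⟩ := AoIAux.attain_b hΔ hk hA0 hmono him hT v₀
        have hFb : F v₀ = 1 + T - tsel Δ k := by rw [hF]; exact hbc.trans hb
        exact ⟨v₀, T - 1, by omega, by omega⟩
      · by_cases hne : (Finset.Icc 2 (kv v₀)).Nonempty
        · obtain ⟨j, hjmem, hjsup⟩ := Finset.exists_mem_eq_sup _ hne (fun j =>
            1 + G.dist (s (i v₀ j)) v₀ + (tsel Δ (i v₀ j) - tsel Δ (i v₀ (j - 1))))
          rw [Finset.mem_Icc] at hjmem
          obtain ⟨hτT, hAc⟩ := AoIAux.attain_c hΔ hk hA0 hmono him hT v₀ hjmem.1 hjmem.2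
          have hpos : 1 ≤ AoIAux.τ G s Δ i v₀ j := by
            have := AoIAux.tsel_one_le Δ (i v₀ j)
            have : AoIAux.τ G s Δ i v₀ j = tsel Δ (i v₀ j) + G.dist (s (i v₀ j)) v₀ := rfl
            omega
          have hFc : F v₀ = 1 + G.dist (s (i v₀ j)) v₀ +
              (tsel Δ (i v₀ j) - tsel Δ (i v₀ (j - 1))) := by
            rw [hF]; exact hbc.trans (hc.trans hjsup)
          exact ⟨v₀, AoIAux.τ G s Δ i v₀ j - 1, by omega, by omega⟩
        · rw [Finset.not_nonempty_iff_eq_empty] at hne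
          have hFz : F v₀ = 0 := by
            rw [hF]
            refine hbc.trans (hc.trans ?_)
            rw [hne]
            simp
          exact ⟨Classical.arbitrary V, 0, hT1, by omega⟩
  -- real-valued supremum
  apply csSup_eq_of_forall_le_of_forall_lt_exists_gt
  · refine ⟨AoIR G s Δ k A0 (Classical.arbitrary V) 0, (Classical.arbitrary V), 0, le_rfl, ?_, rfl⟩
    exact_mod_cast Nat.cast_le.2 (by omega : (0:ℕ) ≤ T)
  · rintro x ⟨v, t, ht0, htT, rfl⟩
    unfold AoIR
    have hmle : (⌊t⌋₊ : ℝ) ≤ t := Nat.floor_le ht0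
    have hlt1 : t < ⌊t⌋₊ + 1 := Nat.lt_floor_add_one t
    have hmT : ⌊t⌋₊ ≤ T := by
      have := Nat.floor_le_floor htT
      rwa [Nat.floor_natCast] at this
    rcases eq_or_lt_of_le hmT with heq | hlt2
    · have hteq : t = (T : ℝ) := le_antisymm htT (heq ▸ hmle)
      have h2 : AoI G s Δ k A0 v ⌊t⌋₊ ≤ P := by rw [heq]; exact key2' v
      have h2' : (AoI G s Δ k A0 v ⌊t⌋₊ : ℝ) ≤ P := Nat.cast_le.2 h2
      have hfl : (⌊t⌋₊ : ℝ) = (T : ℝ) := by exact_mod_cast heq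
      linarith
    · have h1 : AoI G s Δ k A0 v ⌊t⌋₊ + 1 ≤ P := key1' v ⌊t⌋₊ hlt2
      have h1' : (AoI G s Δ k A0 v ⌊t⌋₊ : ℝ) + 1 ≤ P := by exact_mod_cast h1
      linarith
  · intro w hw
    obtain ⟨v, m, hmT, hPm⟩ := key3
    have hPm' : (P : ℝ) ≤ (AoI G s Δ k A0 v m : ℝ) + 1 := by exact_mod_cast hPm
    have hmT' : (m : ℝ) + 1 ≤ (T : ℝ) := by exact_mod_cast hmT
    by_cases hcase : w < (AoI G s Δ k A0 v m : ℝ)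
    · refine ⟨(AoI G s Δ k A0 v m : ℝ), ⟨v, (m : ℝ), by positivity, by linarith, ?_⟩, hcase⟩
      unfold AoIR
      rw [Nat.floor_natCast]
      ring
    · push_neg at hcase
      have hwa : w - (AoI G s Δ k A0 v m : ℝ) < 1 := by linarith
      refine ⟨(AoI G s Δ k A0 v m : ℝ) + (w - (AoI G s Δ k A0 v m : ℝ) + 1) / 2,
        ⟨v, (m : ℝ) + (w - (AoI G s Δ k A0 v m : ℝ) + 1) / 2, ?_, ?_, ?_⟩, ?_⟩
      · have haux : (0:ℝ) ≤ (m:ℝ) := Nat.cast_nonneg m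
        linarith
      · linarith
      · have hfloor : ⌊(m : ℝ) + (w - (AoI G s Δ k A0 v m : ℝ) + 1) / 2⌋₊ = m := by
          rw [Nat.floor_eq_iff (by
            have haux : (0:ℝ) ≤ (m:ℝ) := Nat.cast_nonneg m
            linarith)]
          constructor
          · linarith
          · push_cast
            linarith
        unfold AoIR
        rw [hfloor]
        ring
      · linarith
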